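/- Let β ∈ (1,∞), c ≥ 1, d ≥ 1, and let s be the unique negative solution of (1−s)(1−s/β)^{−β} = 2^{−βd}/c. Then −2^{βd/(β−1)} β^{β/(β−1)} c^{1/(β−1)} ≤ s ≤ −β^{β/(β−1)} c^{1/(β−1)}. -/

import Mathlib

noncomputable section

open Real Set

private lemma F_strictMono (β : ℝ) (hβ : 1 < β) :
    StrictMonoOn (fun t => β * Real.log (1 + t / β) - Real.log (1 + t)) (Set.Ici 0) := by
  have hβ0 : (0:ℝ) < β := by linarith
  have hderiv : ∀ t ∈ Set.Ici (0:ℝ), HasDerivAt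
      (fun t => β * Real.log (1 + t / β) - Real.log (1 + t))
      (β * ((1/β) / (1 + t / β)) - 1 / (1 + t)) t := by
    intro t ht
    have ht0 : (0:ℝ) ≤ t := ht
    have h1 : 0 < 1 + t / β := by positivity
    have h2 : 0 < 1 + t := by positivity
    have i1 : HasDerivAt (fun t : ℝ => 1 + t / β) (1/β) t := by
      simpa using ((hasDerivAt_id t).div_const β).const_add 1
    have l1 : HasDerivAt (fun t : ℝ => Real.log (1 + t / β)) ((1 + t/β)⁻¹ * (1/β)) t :=
      by have := (Real.hasDerivAt_log h1.ne').comp t i1; exact this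
    have i2 : HasDerivAt (fun t : ℝ => 1 + t) (1:ℝ) t := by
      simpa using (hasDerivAt_id t).const_add 1
    have l2 : HasDerivAt (fun t : ℝ => Real.log (1 + t)) ((1 + t)⁻¹ * 1) t :=
      (Real.hasDerivAt_log h2.ne').comp t i2
    have := (l1.const_mul β).sub l2
    refine this.congr_deriv ?_
    ring
  apply strictMonoOn_of_deriv_pos (convex_Ici 0)
  · exact fun t ht => ((hderiv t ht).continuousAt).continuousWithinAt
  · intro t ht
    rw [interior_Ici] at ht
    have ht0 : (0:ℝ) < t := ht
    have h1 : 0 < 1 + t / β := by positivity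
    have h2 : 0 < 1 + t := by positivity
    rw [(hderiv t (le_of_lt ht0)).deriv]
    have heq : β * ((1/β) / (1 + t / β)) = 1 / (1 + t/β) := by
      field_simp
    rw [heq]
    have hlt : 1 + t / β < 1 + t := by
      have : t / β < t := by
        rw [div_lt_iff₀ hβ0]; nlinarith
      linarith
    have := one_div_lt_one_div_of_lt h1 hlt
    linarith

theorem s_double_bound (β : ℝ) (hβ : 1 < β) (c : ℝ) (hc : 1 ≤ c) (d : ℕ) (hd : 1 ≤ d)
    (s : ℝ) (hs : s < 0) (hseq : (1 - s) * (1 - s / β) ^ (-β) = 2 ^ (-(β * d)) / c) :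
    -2 ^ (β * d / (β - 1)) * β ^ (β / (β - 1)) * c ^ (1 / (β - 1)) ≤ s ∧
      s ≤ -β ^ (β / (β - 1)) * c ^ (1 / (β - 1)) := by
  have hβ0 : (0:ℝ) < β := by linarith
  have hβ1 : (0:ℝ) < β - 1 := by linarith
  have hc0 : (0:ℝ) < c := by linarith
  have hd1 : (1:ℝ) ≤ (d:ℝ) := by exact_mod_cast hd
  set t : ℝ := -s with htdef
  have ht0 : 0 < t := by simp [htdef]; linarith
  set T : ℝ := β ^ (β / (β - 1)) * c ^ (1 / (β - 1)) with hTdef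
  set T' : ℝ := 2 ^ (β * d / (β - 1)) * β ^ (β / (β - 1)) * c ^ (1 / (β - 1)) with hT'def
  have hTpos : 0 < T := by positivity
  have hT'pos : 0 < T' := by positivity
  -- power computations
  have hcexp : (c ^ (1 / (β - 1))) ^ (β - 1) = c := by
    rw [← Real.rpow_mul hc0.le, one_div, inv_mul_cancel₀ hβ1.ne', Real.rpow_one]
  have hbexp : (β ^ (β / (β - 1))) ^ (β - 1) = β ^ β := by
    rw [← Real.rpow_mul hβ0.le, div_mul_cancel₀ _ hβ1.ne']
  have h2exp : ((2:ℝ) ^ (β * d / (β - 1))) ^ (β - 1) = 2 ^ (β * d) := by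
    rw [← Real.rpow_mul (by norm_num), div_mul_cancel₀ _ hβ1.ne']
  have hTexp : T ^ (β - 1) = β ^ β * c := by
    rw [hTdef, Real.mul_rpow (by positivity) (by positivity), hbexp, hcexp]
  have hT'exp : T' ^ (β - 1) = 2 ^ (β * d) * (β ^ β * c) := by
    rw [hT'def, Real.mul_rpow (by positivity) (by positivity),
      Real.mul_rpow (by positivity) (by positivity), hbexp, hcexp, h2exp, mul_assoc]
  have hc1 : (1:ℝ) ≤ c ^ (1 / (β - 1)) := by
    calc (1:ℝ) = 1 ^ (1 / (β - 1)) := (Real.one_rpow _).symm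
    _ ≤ c ^ (1 / (β - 1)) := Real.rpow_le_rpow (by norm_num) hc (by positivity)
  have hβT : β ≤ T := by
    have h1 : β = β ^ (1:ℝ) := (Real.rpow_one β).symm
    have h2 : β ^ (1:ℝ) ≤ β ^ (β / (β - 1)) := by
      apply Real.rpow_le_rpow_left_iff hβ |>.mpr
      rw [le_div_iff₀ hβ1]; nlinarith
    calc β = β ^ (1:ℝ) * 1 := by rw [← h1, mul_one]
    _ ≤ β ^ (β / (β - 1)) * c ^ (1 / (β - 1)) := by
        apply mul_le_mul h2 hc1 (by norm_num) (by positivity)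
  have h2d : (2:ℝ) ^ β ≤ 2 ^ (β * d) := by
    apply Real.rpow_le_rpow_left_iff (by norm_num : (1:ℝ) < 2) |>.mpr
    nlinarith
  -- key equation
  have h1t : 0 < 1 + t := by linarith
  have h1tb : 0 < 1 + t / β := by positivity
  have hkey : (1 + t / β) ^ β = 2 ^ (β * d) * c * (1 + t) := by
    have e1 : (1 : ℝ) - s = 1 + t := by rw [htdef]; ring
    have e2 : (1 : ℝ) - s / β = 1 + t / β := by rw [htdef]; ring
    rw [e1, e2] at hseq
    rw [Real.rpow_neg h1tb.le, Real.rpow_neg (by norm_num : (0:ℝ) ≤ 2)] at hseq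
    have hp1 : ((1 + t / β) ^ β : ℝ) ≠ 0 := by positivity
    have hp2 : ((2:ℝ) ^ (β * (d:ℝ)) : ℝ) ≠ 0 := by positivity
    have e3 : ((β + t) / β) ^ β = (1 + t / β) ^ β := by
      rw [show (β + t) / β = 1 + t / β by field_simp]
    field_simp at hseq
    rw [e3] at hseq
    linarith [hseq]
  -- F values
  have hFt : β * Real.log (1 + t / β) - Real.log (1 + t) = Real.log (2 ^ (β * d) * c) := by
    have := congrArg Real.log hkey
    rw [Real.log_rpow h1tb, Real.log_mul (by positivity) h1t.ne'] at this
    linarith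
  -- bound (a): (1+T/β)^β ≤ 2^(βd) c (1+T)
  have hTa : (1 + T / β) ^ β ≤ 2 ^ (β * d) * c * (1 + T) := by
    have hTb : 1 ≤ T / β := (one_le_div₀ hβ0).mpr hβT
    have step1 : (1 + T / β) ^ β ≤ (2 * (T / β)) ^ β :=
      Real.rpow_le_rpow (by positivity) (by linarith) hβ0.le
    have step2 : ((2 : ℝ) * (T / β)) ^ β = 2 ^ β * (T ^ β / β ^ β) := by
      rw [Real.mul_rpow (by norm_num) (by positivity), Real.div_rpow hTpos.le hβ0.le]
    have step3 : T ^ β = β ^ β * c * T := by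
      have : T ^ β = T ^ (β - 1) * T ^ (1:ℝ) := by
        rw [← Real.rpow_add hTpos]; ring_nf
      rw [this, hTexp, Real.rpow_one]
    have step4 : 2 ^ β * (T ^ β / β ^ β) = 2 ^ β * c * T := by
      rw [step3]; field_simp
    have hβββ : (0:ℝ) < 2 ^ (β * d) * c := by positivity
    calc (1 + T / β) ^ β ≤ 2 ^ β * c * T := by rw [← step4, ← step2]; exact step1
    _ ≤ 2 ^ (β * d) * c * T := by gcongr
    _ ≤ 2 ^ (β * d) * c * (1 + T) := by
        have hle : T ≤ 1 + T := by linarith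
        gcongr
  -- bound (b): 2^(βd) c (1+T') ≤ (1+T'/β)^β
  have hT'b : 2 ^ (β * d) * c * (1 + T') ≤ (1 + T' / β) ^ β := by
    have hstep1 : T' / β * (1 + 1 / T') ≤ 1 + T' / β := by
      have h1b : 1 / β ≤ 1 := by rw [div_le_one hβ0]; linarith
      have : T' / β * (1 + 1 / T') = T' / β + 1 / β := by field_simp
      rw [this]; linarith
    have step1 : (T' / β * (1 + 1 / T')) ^ β ≤ (1 + T' / β) ^ β :=
      Real.rpow_le_rpow (by positivity) hstep1 hβ0.le
    have step2 : (T' / β * (1 + 1 / T')) ^ β = (T' / β) ^ β * (1 + 1 / T') ^ β :=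
      Real.mul_rpow (by positivity) (by positivity)
    have bern : 1 + 1 / T' ≤ (1 + 1 / T') ^ β := by
      have := one_add_mul_self_le_rpow_one_add (s := 1 / T')
        (le_trans (by norm_num) (by positivity : (0:ℝ) ≤ 1 / T')) hβ.le
      have h2 : (1:ℝ) + 1 / T' ≤ 1 + β * (1 / T') := by
        have : 1 / T' ≤ β * (1 / T') := le_mul_of_one_le_left (by positivity) hβ.le
        linarith
      linarith
    have step3 : (T' / β) ^ β * (1 + 1 / T') = 2 ^ (β * d) * c * (1 + T') := by
      have e1 : (T' / β) ^ β = T' ^ β / β ^ β := Real.div_rpow hT'pos.le hβ0.le β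
      have e2 : T' ^ β = T' ^ (β - 1) * T' := by
        rw [← Real.rpow_add_one hT'pos.ne']; ring_nf
      have e3 : (1:ℝ) + 1 / T' = (1 + T') / T' := by field_simp; ring
      rw [e1, e2, hT'exp, e3]
      have hββ : (β:ℝ) ^ β ≠ 0 := by positivity
      field_simp
    calc 2 ^ (β * d) * c * (1 + T') = (T' / β) ^ β * (1 + 1 / T') := step3.symm
    _ ≤ (T' / β) ^ β * (1 + 1 / T') ^ β := by
        apply mul_le_mul_of_nonneg_left bern (by positivity)
    _ = (T' / β * (1 + 1 / T')) ^ β := step2.symm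
    _ ≤ (1 + T' / β) ^ β := step1
  -- F comparisons
  have hF := F_strictMono β hβ
  have hFT : β * Real.log (1 + T / β) - Real.log (1 + T) ≤ Real.log (2 ^ (β * d) * c) := by
    have hlog := Real.log_le_log (by positivity) hTa
    rw [Real.log_rpow (by positivity), Real.log_mul (by positivity) (by positivity)] at hlog
    linarith
  have hFT' : Real.log (2 ^ (β * d) * c) ≤ β * Real.log (1 + T' / β) - Real.log (1 + T') := by
    have hlog := Real.log_le_log (by positivity) hT'b
    rw [Real.log_rpow (by positivity), Real.log_mul (by positivity) (by positivity)] at hlog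
    linarith
  have hTt : T ≤ t := by
    by_contra h
    push_neg at h
    have := hF (Set.mem_Ici.mpr ht0.le) (Set.mem_Ici.mpr hTpos.le) h
    simp only at this
    linarith
  have htT' : t ≤ T' := by
    by_contra h
    push_neg at h
    have := hF (Set.mem_Ici.mpr hT'pos.le) (Set.mem_Ici.mpr ht0.le) h
    simp only at this
    linarith
  constructor
  · rw [hT'def] at htT'; rw [htdef] at htT'; linarith
  · rw [hTdef] at hTt; rw [htdef] at hTt; linarith

end
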